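/- Let ‖·‖ denote the Euclidean norm on ℝ^d and let |·| be any other norm on ℝ^d. Then there exists λ ∈ [0,1) (depending only on the equivalence constants between the two norms) such that every curve γ : I → ℝ^d that is self-expanded with respect to |·| is a λ-curve with respect to ‖·‖. -/

import Mathlib

open scoped RealInnerProductSpace
open Set

set_option maxHeartbeats 1000000 in
/-- If `‖·‖` is the Euclidean norm on `ℝ^d` and `N` is any other norm on
`ℝ^d`, then there exists `λ ∈ [0,1)` such that every curve that is self-expanded with
respect to `N` is a `λ`-curve with respect to `‖·‖`. -/
theorem selfExpanded_is_lambda_curve (d : ℕ)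
    (N : Seminorm ℝ (EuclideanSpace ℝ (Fin d)))
    (hN : ∀ x, N x = 0 → x = 0) :
    ∃ lam : ℝ, 0 ≤ lam ∧ lam < 1 ∧
      ∀ (I : Set ℝ), I.OrdConnected →
        ∀ γ : ℝ → EuclideanSpace ℝ (Fin d),
          (∀ t₁ ∈ I, ∀ t₂ ∈ I, ∀ t₃ ∈ I, t₁ ≤ t₂ → t₂ ≤ t₃ →
            N (γ t₁ - γ t₂) ≤ N (γ t₁ - γ t₃)) →
          ∀ t₁ ∈ I, ∀ t₂ ∈ I, ∀ t₃ ∈ I, t₁ ≤ t₂ → t₂ ≤ t₃ →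
            ‖γ t₁ - γ t₂‖ ≤ ‖γ t₁ - γ t₃‖ + lam * ‖γ t₂ - γ t₃‖ := by
  by_cases hd : ∀ x : EuclideanSpace ℝ (Fin d), x = 0
  · refine ⟨0, le_refl 0, one_pos, ?_⟩
    intro I _ γ _ t₁ _ t₂ _ t₃ _ _ _
    rw [hd (γ t₁ - γ t₂), hd (γ t₁ - γ t₃), hd (γ t₂ - γ t₃)]
    simp
  push_neg at hd
  obtain ⟨x₀, hx₀⟩ := hd
  -- subadditivity on sums
  have hsum : ∀ (f : Fin d → EuclideanSpace ℝ (Fin d)),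
      N (∑ i, f i) ≤ ∑ i, N (f i) := by
    intro f
    classical
    induction (Finset.univ : Finset (Fin d)) using Finset.cons_induction with
    | empty => simp
    | cons a s ha ih =>
      rw [Finset.sum_cons, Finset.sum_cons]
      exact (map_add_le_add N _ _).trans (by linarith)
  -- upper bound M
  obtain ⟨M, hM0, hM⟩ : ∃ M : ℝ, 0 < M ∧ ∀ x, N x ≤ M * ‖x‖ := by
    have hnn : 0 ≤ ∑ i, N (EuclideanSpace.single i (1:ℝ)) :=
      Finset.sum_nonneg fun i _ => apply_nonneg N _
    refine ⟨(∑ i, N (EuclideanSpace.single i (1:ℝ))) + 1, by linarith, fun x => ?_⟩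
    have hrepr : x = ∑ i, x i • EuclideanSpace.single i (1:ℝ) := by
      ext j
      rw [WithLp.ofLp_sum, Finset.sum_apply]
      simp [EuclideanSpace.single_apply]
    have habs : ∀ i, |x i| ≤ ‖x‖ := by
      intro i
      rw [EuclideanSpace.norm_eq x, ← Real.sqrt_sq_eq_abs]
      apply Real.sqrt_le_sqrt
      calc (x i)^2 = ‖x i‖^2 := by rw [Real.norm_eq_abs, sq_abs]
        _ ≤ ∑ j, ‖x j‖^2 := Finset.single_le_sum (f := fun j => ‖x j‖^2)
            (fun j _ => sq_nonneg _) (Finset.mem_univ i)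
    calc N x = N (∑ i, x i • EuclideanSpace.single i (1:ℝ)) := by rw [← hrepr]
      _ ≤ ∑ i, N (x i • EuclideanSpace.single i (1:ℝ)) := hsum _
      _ = ∑ i, |x i| * N (EuclideanSpace.single i (1:ℝ)) := by
          refine Finset.sum_congr rfl fun i _ => ?_
          rw [map_smul_eq_mul, Real.norm_eq_abs]
      _ ≤ ∑ i, ‖x‖ * N (EuclideanSpace.single i (1:ℝ)) :=
          Finset.sum_le_sum fun i _ =>
            mul_le_mul_of_nonneg_right (habs i) (apply_nonneg N _)
      _ = (∑ i, N (EuclideanSpace.single i (1:ℝ))) * ‖x‖ := by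
          rw [← Finset.mul_sum, mul_comm]
      _ ≤ ((∑ i, N (EuclideanSpace.single i (1:ℝ))) + 1) * ‖x‖ := by
          nlinarith [norm_nonneg x]
  -- continuity of N
  have hcont : Continuous N := by
    have hlip : LipschitzWith (Real.toNNReal M) N := by
      apply LipschitzWith.of_dist_le_mul
      intro x y
      rw [Real.dist_eq]
      have h1 : N x - N y ≤ N (x - y) := by
        have := map_add_le_add N (x - y) y
        simp only [sub_add_cancel] at this
        linarith
      have h2 : N y - N x ≤ N (x - y) := by
        have := map_add_le_add N (y - x) x
        simp only [sub_add_cancel] at this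
        have hneg : N (y - x) = N (x - y) := by
          rw [← neg_sub x y, map_neg_eq_map]
        linarith
      have : |N x - N y| ≤ N (x - y) := abs_sub_le_iff.mpr ⟨h1, h2⟩
      calc |N x - N y| ≤ N (x - y) := this
        _ ≤ M * ‖x - y‖ := hM _
        _ = (Real.toNNReal M : ℝ) * dist x y := by
            rw [dist_eq_norm, Real.coe_toNNReal _ hM0.le]
    exact hlip.continuous
  -- lower bound m
  obtain ⟨m, hm0, hm⟩ : ∃ m : ℝ, 0 < m ∧ ∀ x, m * ‖x‖ ≤ N x := by
    have hsne : (Metric.sphere (0 : EuclideanSpace ℝ (Fin d)) 1).Nonempty := by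
      refine ⟨‖x₀‖⁻¹ • x₀, ?_⟩
      have h0 : ‖x₀‖ ≠ 0 := norm_ne_zero_iff.mpr hx₀
      simp [norm_smul, abs_of_nonneg (inv_nonneg.mpr (norm_nonneg x₀)),
        inv_mul_cancel₀ h0]
    obtain ⟨z, hz, hzmin⟩ := (isCompact_sphere (0 : EuclideanSpace ℝ (Fin d)) 1).exists_isMinOn
      hsne hcont.continuousOn
    have hz1 : ‖z‖ = 1 := by simpa using hz
    have hzne : z ≠ 0 := by
      intro h; rw [h] at hz1; simp at hz1
    have hmz : 0 < N z := by
      rcases lt_or_eq_of_le (apply_nonneg N z) with h | h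
      · exact h
      · exact absurd (hN z h.symm) hzne
    refine ⟨N z, hmz, fun x => ?_⟩
    rcases eq_or_ne x 0 with rfl | hx
    · simp
    · have hnx : (0:ℝ) < ‖x‖ := norm_pos_iff.mpr hx
      have h1 : ‖x‖⁻¹ • x ∈ Metric.sphere (0 : EuclideanSpace ℝ (Fin d)) 1 := by
        simp [norm_smul, abs_of_nonneg (inv_nonneg.mpr (norm_nonneg x)),
          inv_mul_cancel₀ hnx.ne']
      have := isMinOn_iff.mp hzmin _ h1
      rw [map_smul_eq_mul, Real.norm_eq_abs, abs_of_nonneg (inv_nonneg.mpr (norm_nonneg x))]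
        at this
      calc N z * ‖x‖ ≤ (‖x‖⁻¹ * N x) * ‖x‖ :=
            mul_le_mul_of_nonneg_right this (norm_nonneg x)
        _ = N x := by field_simp
  -- parameters
  set S : ℝ := Real.sqrt (m^2 + M^2) with hSdef
  have hS0 : 0 < S := Real.sqrt_pos.mpr (by positivity)
  have hS2 : S^2 = m^2 + M^2 := Real.sq_sqrt (by positivity)
  set s₀ : ℝ := M / S with hs₀def
  have hs₀pos : 0 < s₀ := div_pos hM0 hS0
  have hs₀lt : s₀ < 1 := by
    rw [hs₀def, div_lt_one hS0]
    nlinarith [hS0, hS2, hm0]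
  have hs₀sq : s₀^2 * (m^2 + M^2) = M^2 := by
    rw [hs₀def, div_pow, hS2]
    field_simp
  set K : ℝ := 2 * M / m with hKdef
  have hK0 : 0 < K := by positivity
  set lam : ℝ := (K + s₀) / (K + 1) with hlamdef
  have hlam_eq : lam * (K + 1) = K + s₀ := by
    rw [hlamdef]
    field_simp
  have hlam0 : 0 ≤ lam := by positivity
  have hlam1 : lam < 1 := by
    rw [hlamdef, div_lt_one (by linarith)]
    linarith
  have hlamK : (1 - lam) * K = lam - s₀ := by linarith [hlam_eq]
  refine ⟨lam, hlam0, hlam1, ?_⟩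
  intro I _ γ hexp t₁ ht₁ t₂ ht₂ t₃ ht₃ h12 h23
  set A := γ t₁ with hA
  set B := γ t₂ with hB
  set C := γ t₃ with hC
  have hABC : N (A - B) ≤ N (A - C) := hexp t₁ ht₁ t₂ ht₂ t₃ ht₃ h12 h23
  set u := ‖A - B‖ with hu
  set v := ‖A - C‖ with hv
  set w := ‖B - C‖ with hwdef
  have hu0 : 0 ≤ u := norm_nonneg _
  have hv0 : 0 ≤ v := norm_nonneg _
  have hw0 : 0 ≤ w := norm_nonneg _
  -- Step 0: w ≤ K * v
  have hwv : w ≤ K * v := by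
    have hBA : N (B - A) = N (A - B) := by rw [← neg_sub A B, map_neg_eq_map]
    have h1 : N (B - C) ≤ 2 * N (A - C) := by
      have heq : B - C = (B - A) + (A - C) := by abel
      rw [heq]
      have := map_add_le_add N (B - A) (A - C)
      linarith
    have h2 : m * w ≤ 2 * (M * v) := by
      have h3 := hm (B - C)
      have h4 := hM (A - C)
      rw [← hwdef] at h3
      rw [← hv] at h4
      linarith
    rw [hKdef, div_mul_eq_mul_div, le_div_iff₀ hm0]
    linarith
  -- Step 1: inner product bound  P ≤ s₀ * (v * w)
  set P : ℝ := inner ℝ (A - C) (C - B) with hPdef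
  have hP : P ≤ s₀ * (v * w) := by
    rcases le_or_gt P 0 with h | h
    · exact h.trans (by positivity)
    have hvpos : 0 < v := by
      rcases eq_or_lt_of_le hv0 with h' | h'
      · exfalso
        have hz : A - C = 0 := norm_eq_zero.mp h'.symm
        rw [hPdef, hz, inner_zero_left] at h
        exact lt_irrefl 0 h
      · exact h'
    have hwpos : 0 < w := by
      rcases eq_or_lt_of_le hw0 with h' | h'
      · exfalso
        have h0 : B - C = 0 := norm_eq_zero.mp h'.symm
        have hz : C - B = 0 := by rw [← neg_sub B C, h0, neg_zero]
        rw [hPdef, hz, inner_zero_right] at h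
        exact lt_irrefl 0 h
      · exact h'
    have hCB : ‖C - B‖ = w := by rw [hwdef, ← neg_sub B C, norm_neg]
    set r : EuclideanSpace ℝ (Fin d) := (v^2) • (C - B) - P • (A - C) with hrdef
    have hr_norm : ‖r‖^2 = v^2 * (v^2 * w^2 - P^2) := by
      have h1 := norm_sub_sq_real ((v^2) • (C - B)) (P • (A - C))
      have hPc : (inner ℝ (C - B) (A - C) : ℝ) = P := by
        rw [hPdef]; exact real_inner_comm _ _
      rw [real_inner_smul_left, real_inner_smul_right,
        hPc, norm_smul, norm_smul, hCB,
        Real.norm_eq_abs, Real.norm_eq_abs,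
        abs_of_nonneg (by positivity : (0:ℝ) ≤ v^2), abs_of_nonneg h.le] at h1
      rw [hrdef, h1, ← hv]
      ring
    have hdecomp : (v^2) • (A - B) = (v^2 + P) • (A - C) + r := by
      rw [hrdef]
      module
    have hkey : (v^2 + P) * N (A - C) ≤ v^2 * N (A - B) + N r := by
      have heq : (v^2 + P) • (A - C) = (v^2) • (A - B) + (-r) := by
        rw [hdecomp]; abel
      have h1 := map_add_le_add N ((v^2) • (A - B)) (-r)
      rw [← heq, map_neg_eq_map, map_smul_eq_mul, map_smul_eq_mul,
        Real.norm_eq_abs, Real.norm_eq_abs,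
        abs_of_nonneg (by positivity : (0:ℝ) ≤ v^2),
        abs_of_nonneg (by positivity : (0:ℝ) ≤ v^2 + P)] at h1
      exact h1
    have h2 : P * (m * v) ≤ M * ‖r‖ := by
      have hmono : v^2 * N (A - B) ≤ v^2 * N (A - C) :=
        mul_le_mul_of_nonneg_left hABC (by positivity)
      have h3 : P * N (A - C) ≤ N r := by nlinarith [hkey, hmono]
      have hNAC := hm (A - C)
      rw [← hv] at hNAC
      have h3' : P * (m * v) ≤ P * N (A - C) :=
        mul_le_mul_of_nonneg_left hNAC h.le
      have hNr := hM r
      linarith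
    have h4 : (P * (m * v))^2 ≤ (M * ‖r‖)^2 :=
      pow_le_pow_left₀ (by positivity) h2 2
    have h5 : (m^2 + M^2) * P^2 ≤ M^2 * (v^2 * w^2) := by
      have hv2 : (0:ℝ) < v^2 := by positivity
      apply le_of_mul_le_mul_right _ hv2
      calc (m^2 + M^2) * P^2 * v^2
          = (P * (m * v))^2 + M^2 * P^2 * v^2 := by ring
        _ ≤ (M * ‖r‖)^2 + M^2 * P^2 * v^2 := by linarith
        _ = M^2 * (v^2 * (v^2 * w^2 - P^2)) + M^2 * P^2 * v^2 := by
            rw [mul_pow, hr_norm]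
        _ = M^2 * (v^2 * w^2) * v^2 := by ring
    have h6 : P^2 ≤ (s₀ * (v * w))^2 := by
      have hmm : (0:ℝ) < m^2 + M^2 := by positivity
      apply le_of_mul_le_mul_left _ hmm
      calc (m^2 + M^2) * P^2 ≤ M^2 * (v^2 * w^2) := h5
        _ = (s₀^2 * (m^2 + M^2)) * (v^2 * w^2) := by rw [hs₀sq]
        _ = (m^2 + M^2) * (s₀ * (v * w))^2 := by ring
    calc P = Real.sqrt (P^2) := (Real.sqrt_sq h.le).symm
      _ ≤ Real.sqrt ((s₀ * (v * w))^2) := Real.sqrt_le_sqrt h6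
      _ = s₀ * (v * w) := Real.sqrt_sq (by positivity)
  -- Step 2: law of cosines
  have hu2 : u^2 = v^2 + w^2 + 2 * P := by
    have heq : A - B = (A - C) + (C - B) := by abel
    have hCB : ‖C - B‖ = w := by rw [hwdef, ← neg_sub B C, norm_neg]
    have hPc2 : (inner ℝ (A - C) (C - B) : ℝ) = P := hPdef.symm
    rw [hu, heq, @norm_add_sq_real, hCB, ← hv, hPc2]
    ring
  -- conclusion
  have hrhs : 0 ≤ v + lam * w := by positivity
  have key : (1 - lam^2) * w^2 ≤ 2 * (lam - s₀) * (v * w) := by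
    calc (1 - lam^2) * w^2 = ((1 - lam) * (1 + lam)) * w^2 := by ring
      _ ≤ ((1 - lam) * 2) * w^2 := by
          apply mul_le_mul_of_nonneg_right _ (sq_nonneg w)
          apply mul_le_mul_of_nonneg_left (by linarith) (by linarith)
      _ = 2 * (1 - lam) * (w * w) := by ring
      _ ≤ 2 * (1 - lam) * ((K * v) * w) := by
          apply mul_le_mul_of_nonneg_left
            (mul_le_mul_of_nonneg_right hwv hw0) (by linarith)
      _ = 2 * ((1 - lam) * K) * (v * w) := by ring
      _ = 2 * (lam - s₀) * (v * w) := by rw [hlamK]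
  have hfinal : u^2 ≤ (v + lam * w)^2 := by
    rw [hu2]
    have expand : (v + lam * w)^2 = v^2 + 2 * lam * (v * w) + lam^2 * w^2 := by ring
    rw [expand]
    nlinarith [key, hP]
  calc u = Real.sqrt (u^2) := (Real.sqrt_sq hu0).symm
    _ ≤ Real.sqrt ((v + lam * w)^2) := Real.sqrt_le_sqrt hfinal
    _ = v + lam * w := Real.sqrt_sq hrhs
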